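/- Let B be a Rota-Baxter operator on a Hopf heap (C, Δ, [−,−,−]) over a field k, and let ψ : C → C be a bijective Hopf heap homomorphism (a Hopf heap automorphism). Then B^{(ψ)} := ψ ∘ B ∘ ψ⁻¹ is also a Rota-Baxter operator on (C, Δ, [−,−,−]). -/
import Mathlib


open TensorProduct

noncomputable section

variable (k : Type*) [Field k]

section Shuffles

variable (A B P Q R S : Type*)
  [AddCommGroup A] [Module k A] [AddCommGroup B] [Module k B]
  [AddCommGroup P] [Module k P] [AddCommGroup Q] [Module k Q]
  [AddCommGroup R] [Module k R] [AddCommGroup S] [Module k S]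

/-- `(a ⊗ b) ⊗ ((p ⊗ q) ⊗ (r ⊗ s)) ↦ (a ⊗ (q ⊗ r)) ⊗ (b ⊗ (p ⊗ s))`, the shuffle appearing in
the compatibility of a Hopf-heap bracket with comultiplication:
`Δ([a,b,c]) = [a₁,b₂,c₁] ⊗ [a₂,b₁,c₂]`. -/
def sweedlerShuffle :
    ((A ⊗[k] B) ⊗[k] ((P ⊗[k] Q) ⊗[k] (R ⊗[k] S))) →ₗ[k]
      ((A ⊗[k] (Q ⊗[k] R)) ⊗[k] (B ⊗[k] (P ⊗[k] S))) :=
  (tensorTensorTensorComm k A B (Q ⊗[k] R) (P ⊗[k] S)).toLinearMap ∘ₗ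
    (TensorProduct.map LinearMap.id
      ((tensorTensorTensorComm k Q P R S).toLinearMap ∘ₗ
        TensorProduct.map (TensorProduct.comm k P Q).toLinearMap LinearMap.id))

/-- `u₁ ⊗ (u₂ ⊗ (u₃ ⊗ u₄)) ↦ (u₁ ⊗ (u₄ ⊗ u₂)) ⊗ u₃`, the shuffle appearing in the
Rota–Baxter identity. -/
def rbShuffle :
    (A ⊗[k] (P ⊗[k] (Q ⊗[k] R))) →ₗ[k] ((A ⊗[k] (R ⊗[k] P)) ⊗[k] Q) :=
  (TensorProduct.assoc k A (R ⊗[k] P) Q).symm.toLinearMap ∘ₗ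
    TensorProduct.map LinearMap.id
      ((TensorProduct.comm k Q (R ⊗[k] P)).toLinearMap ∘ₗ
        (TensorProduct.assoc k Q R P).toLinearMap ∘ₗ
        (TensorProduct.comm k P (Q ⊗[k] R)).toLinearMap)

end Shuffles

section Mul

variable {C : Type*} [AddCommGroup C] [Module k C]

/-- Right multiplication `a ↦ μ (a ⊗ b)` by a fixed element, for a bilinear product `μ`. -/
def rmulBy (μ : (C ⊗[k] C) →ₗ[k] C) (b : C) : C →ₗ[k] C :=
  μ ∘ₗ ((TensorProduct.mk k C C).flip b)

end Mul

section Heap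

variable {C : Type*} [AddCommGroup C] [Module k C] [Coalgebra k C]

/-- Iterated comultiplication `a ↦ a₁ ⊗ (a₂ ⊗ a₃)`. -/
def comul2 : C →ₗ[k] (C ⊗[k] (C ⊗[k] C)) :=
  (TensorProduct.map LinearMap.id Coalgebra.comul) ∘ₗ Coalgebra.comul

/-- Iterated comultiplication `a ↦ a₁ ⊗ (a₂ ⊗ (a₃ ⊗ a₄))`. -/
def comul3 : C →ₗ[k] (C ⊗[k] (C ⊗[k] (C ⊗[k] C))) :=
  (TensorProduct.map LinearMap.id (comul2 k)) ∘ₗ Coalgebra.comul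

/-- The pointwise ternary bracket `[a,b,c]` of a Hopf heap with structure map `χ`. -/
def br (χ : (C ⊗[k] (C ⊗[k] C)) →ₗ[k] C) (a b c : C) : C := χ (a ⊗ₜ[k] (b ⊗ₜ[k] c))

/-- `x` is a group-like element of the coalgebra `C`. -/
def IsGrouplike (x : C) : Prop :=
  Coalgebra.comul (R := k) x = x ⊗ₜ[k] x ∧ Coalgebra.counit (R := k) x = 1

/-- `(C, Δ, ε, χ)` is a Hopf heap: `χ` is a coalgebra map `C ⊗ C^cop ⊗ C → C`
(counit and comultiplication conditions, the latter in the Sweedler form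
`Δ([a,b,c]) = [a₁,b₂,c₁] ⊗ [a₂,b₁,c₂]`), the bracket is associative
(`[[a,b,c],d,h] = [a,b,[c,d,h]]`), and `[c₁,c₂,a] = ε(c)a = [a,c₁,c₂]`. -/
structure IsHopfHeap (χ : (C ⊗[k] (C ⊗[k] C)) →ₗ[k] C) : Prop where
  counit_br : ∀ a b c : C,
    Coalgebra.counit (R := k) (br k χ a b c) =
      Coalgebra.counit (R := k) a * Coalgebra.counit (R := k) b * Coalgebra.counit (R := k) c
  comul_br : ∀ a b c : C,
    Coalgebra.comul (R := k) (br k χ a b c) =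
      TensorProduct.map χ χ (sweedlerShuffle k C C C C C C
        ((Coalgebra.comul (R := k) a) ⊗ₜ[k]
          ((Coalgebra.comul (R := k) b) ⊗ₜ[k] (Coalgebra.comul (R := k) c))))
  assoc_br : ∀ a b c d h : C,
    br k χ (br k χ a b c) d h = br k χ a b (br k χ c d h)
  left_cancel : ∀ c a : C,
    χ ((TensorProduct.assoc k C C C) ((Coalgebra.comul (R := k) c) ⊗ₜ[k] a)) =
      Coalgebra.counit (R := k) c • a
  right_cancel : ∀ c a : C,
    χ (a ⊗ₜ[k] (Coalgebra.comul (R := k) c)) = Coalgebra.counit (R := k) c • a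

/-- `B` is a Rota–Baxter operator on the Hopf heap `(C, Δ, χ)`:
`B [a,b,c] = [B a, B b, B c]` and
`B(a₁) ⊗ B(a₂) = [B(a)₁, B(B(a)₄), B(B(a)₂)] ⊗ B(a)₃`. -/
structure IsRBOp (χ : (C ⊗[k] (C ⊗[k] C)) →ₗ[k] C) (B : C →ₗ[k] C) : Prop where
  map_br : ∀ a b c : C, B (br k χ a b c) = br k χ (B a) (B b) (B c)
  rb : ∀ a : C,
    TensorProduct.map B B (Coalgebra.comul (R := k) a) =
      TensorProduct.map (χ ∘ₗ TensorProduct.map LinearMap.id (TensorProduct.map B B))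
        LinearMap.id (rbShuffle k C C C C (comul3 k (B a)))

/-- The multiplication `a ·ₓ b = [a, x, b]` of the Hopf algebra `H_x(C)`, as a linear map. -/
def heapMul (χ : (C ⊗[k] (C ⊗[k] C)) →ₗ[k] C) (x : C) : (C ⊗[k] C) →ₗ[k] C :=
  χ ∘ₗ TensorProduct.map LinearMap.id (TensorProduct.mk k C C x)

/-- The antipode `S_x(a) = [x, a, x]` of the Hopf algebra `H_x(C)`, as a linear map. -/
def heapAntipode (χ : (C ⊗[k] (C ⊗[k] C)) →ₗ[k] C) (x : C) : C →ₗ[k] C :=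
  χ ∘ₗ (TensorProduct.mk k C (C ⊗[k] C) x) ∘ₗ ((TensorProduct.mk k C C).flip x)

end Heap

section HeapHom

variable {C D : Type*} [AddCommGroup C] [Module k C] [Coalgebra k C]
  [AddCommGroup D] [Module k D] [Coalgebra k D]

/-- `f` is a homomorphism of Hopf heaps: a coalgebra map preserving the bracket. -/
def IsHeapHom (χC : (C ⊗[k] (C ⊗[k] C)) →ₗ[k] C) (χD : (D ⊗[k] (D ⊗[k] D)) →ₗ[k] D)
    (f : C →ₗ[k] D) : Prop :=
  (∀ a : C, Coalgebra.comul (R := k) (f a) = TensorProduct.map f f (Coalgebra.comul (R := k) a)) ∧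
  (∀ a : C, Coalgebra.counit (R := k) (f a) = Coalgebra.counit (R := k) a) ∧
  (∀ a b c : C, f (br k χC a b c) = br k χD (f a) (f b) (f c))

end HeapHom

section HopfAlg

variable (H : Type*) [Ring H] [HopfAlgebra k H]

/-- The Hopf-heap structure map `a ⊗ b ⊗ c ↦ a · S(b) · c` of a Hopf algebra. -/
def hopfHeapChi : (H ⊗[k] (H ⊗[k] H)) →ₗ[k] H :=
  (LinearMap.mul' k H) ∘ₗ TensorProduct.map LinearMap.id
    ((LinearMap.mul' k H) ∘ₗ TensorProduct.map (HopfAlgebra.antipode (R := k)) LinearMap.id)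

/-- The triple multiplication `a ⊗ (b ⊗ c) ↦ a·(b·c)`. -/
def mulTriple : (H ⊗[k] (H ⊗[k] H)) →ₗ[k] H :=
  (LinearMap.mul' k H) ∘ₗ TensorProduct.map LinearMap.id (LinearMap.mul' k H)

end HopfAlg

end
/-- conjugating a Rota–Baxter operator on a Hopf heap by a Hopf heap
automorphism again yields a Rota–Baxter operator. -/
theorem rbOp_conjugate {k : Type*} [Field k] {C : Type*} [AddCommGroup C] [Module k C]
    [Coalgebra k C] (χ : (C ⊗[k] (C ⊗[k] C)) →ₗ[k] C) (hχ : IsHopfHeap k χ)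
    (B : C →ₗ[k] C) (hB : IsRBOp k χ B)
    (ψ : C ≃ₗ[k] C) (hψ : IsHeapHom k χ χ ψ.toLinearMap) :
    IsRBOp k χ (ψ.toLinearMap ∘ₗ B ∘ₗ ψ.symm.toLinearMap) := by
  obtain ⟨hcomul, hcounit, hbr⟩ := hψ
  have hinv : ψ.symm.toLinearMap ∘ₗ ψ.toLinearMap = LinearMap.id := by
    ext x; simp
  have hinv' : ψ.toLinearMap ∘ₗ ψ.symm.toLinearMap = LinearMap.id := by
    ext x; simp
  have hcomL : (Coalgebra.comul (R := k) (A := C)) ∘ₗ ψ.toLinearMap =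
      TensorProduct.map ψ.toLinearMap ψ.toLinearMap ∘ₗ Coalgebra.comul := by
    ext x; simpa using hcomul x
  have hmapinv : TensorProduct.map ψ.symm.toLinearMap ψ.symm.toLinearMap ∘ₗ
      TensorProduct.map ψ.toLinearMap ψ.toLinearMap = LinearMap.id := by
    rw [← TensorProduct.map_comp, hinv, TensorProduct.map_id]
  have hcomIL : (Coalgebra.comul (R := k) (A := C)) ∘ₗ ψ.symm.toLinearMap =
      TensorProduct.map ψ.symm.toLinearMap ψ.symm.toLinearMap ∘ₗ Coalgebra.comul := by
    ext x
    have h := hcomul (ψ.symm x)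
    simp only [LinearEquiv.coe_coe, LinearEquiv.apply_symm_apply] at h
    simp only [LinearMap.comp_apply, LinearEquiv.coe_coe]
    rw [h, ← LinearMap.comp_apply, hmapinv, LinearMap.id_apply]
  have hchiL : χ ∘ₗ TensorProduct.map ψ.toLinearMap
      (TensorProduct.map ψ.toLinearMap ψ.toLinearMap) = ψ.toLinearMap ∘ₗ χ := by
    ext a b c
    simpa [br] using (hbr a b c).symm
  have hcom2L : comul2 k ∘ₗ ψ.toLinearMap =
      TensorProduct.map ψ.toLinearMap (TensorProduct.map ψ.toLinearMap ψ.toLinearMap) ∘ₗ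
        comul2 k := by
    unfold comul2
    rw [LinearMap.comp_assoc, hcomL, ← LinearMap.comp_assoc, ← TensorProduct.map_comp,
      LinearMap.id_comp, hcomL,
      show TensorProduct.map ψ.toLinearMap
          (TensorProduct.map ψ.toLinearMap ψ.toLinearMap ∘ₗ Coalgebra.comul)
          = TensorProduct.map ψ.toLinearMap (TensorProduct.map ψ.toLinearMap ψ.toLinearMap) ∘ₗ
            TensorProduct.map LinearMap.id Coalgebra.comul by
        rw [← TensorProduct.map_comp, LinearMap.comp_id],
      LinearMap.comp_assoc]
  have hcom3L : comul3 k ∘ₗ ψ.toLinearMap =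
      TensorProduct.map ψ.toLinearMap (TensorProduct.map ψ.toLinearMap
        (TensorProduct.map ψ.toLinearMap ψ.toLinearMap)) ∘ₗ comul3 k := by
    unfold comul3
    rw [LinearMap.comp_assoc, hcomL, ← LinearMap.comp_assoc, ← TensorProduct.map_comp,
      LinearMap.id_comp, hcom2L,
      show TensorProduct.map ψ.toLinearMap
          (TensorProduct.map ψ.toLinearMap (TensorProduct.map ψ.toLinearMap ψ.toLinearMap) ∘ₗ
            comul2 k)
          = TensorProduct.map ψ.toLinearMap (TensorProduct.map ψ.toLinearMap
              (TensorProduct.map ψ.toLinearMap ψ.toLinearMap)) ∘ₗ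
            TensorProduct.map LinearMap.id (comul2 k) by
        rw [← TensorProduct.map_comp, LinearMap.comp_id],
      LinearMap.comp_assoc]
  have hnat : rbShuffle k C C C C ∘ₗ
      TensorProduct.map ψ.toLinearMap (TensorProduct.map ψ.toLinearMap
        (TensorProduct.map ψ.toLinearMap ψ.toLinearMap))
      = TensorProduct.map (TensorProduct.map ψ.toLinearMap
          (TensorProduct.map ψ.toLinearMap ψ.toLinearMap)) ψ.toLinearMap ∘ₗ
        rbShuffle k C C C C := by
    ext a p q r
    simp [rbShuffle]
  have hBrbL : TensorProduct.map B B ∘ₗ (Coalgebra.comul (R := k) (A := C)) =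
      TensorProduct.map (χ ∘ₗ TensorProduct.map LinearMap.id (TensorProduct.map B B))
        LinearMap.id ∘ₗ rbShuffle k C C C C ∘ₗ comul3 k ∘ₗ B := by
    ext x; simpa using hB.rb x
  have hbrI : ∀ a b c : C, ψ.symm (br k χ a b c) =
      br k χ (ψ.symm a) (ψ.symm b) (ψ.symm c) := by
    intro a b c
    apply ψ.injective
    have h := hbr (ψ.symm a) (ψ.symm b) (ψ.symm c)
    simp only [LinearEquiv.coe_coe, LinearEquiv.apply_symm_apply] at h ⊢
    rw [h]
  have eB : (ψ.toLinearMap ∘ₗ B ∘ₗ ψ.symm.toLinearMap) ∘ₗ ψ.toLinearMap =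
      ψ.toLinearMap ∘ₗ B := by
    simp only [LinearMap.comp_assoc, hinv, LinearMap.comp_id]
  constructor
  · intro a b c
    simp only [LinearMap.comp_apply, LinearEquiv.coe_coe]
    rw [hbrI, hB.map_br]
    simpa using hbr (B (ψ.symm a)) (B (ψ.symm b)) (B (ψ.symm c))
  · intro a
    have key : TensorProduct.map (ψ.toLinearMap ∘ₗ B ∘ₗ ψ.symm.toLinearMap)
        (ψ.toLinearMap ∘ₗ B ∘ₗ ψ.symm.toLinearMap) ∘ₗ (Coalgebra.comul (R := k) (A := C)) =
        TensorProduct.map (χ ∘ₗ TensorProduct.map LinearMap.id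
            (TensorProduct.map (ψ.toLinearMap ∘ₗ B ∘ₗ ψ.symm.toLinearMap)
              (ψ.toLinearMap ∘ₗ B ∘ₗ ψ.symm.toLinearMap))) LinearMap.id ∘ₗ
          rbShuffle k C C C C ∘ₗ comul3 k ∘ₗ (ψ.toLinearMap ∘ₗ B ∘ₗ ψ.symm.toLinearMap) := by
      have hL : TensorProduct.map (ψ.toLinearMap ∘ₗ B ∘ₗ ψ.symm.toLinearMap)
          (ψ.toLinearMap ∘ₗ B ∘ₗ ψ.symm.toLinearMap) ∘ₗ (Coalgebra.comul (R := k) (A := C)) =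
          TensorProduct.map ψ.toLinearMap ψ.toLinearMap ∘ₗ
            (TensorProduct.map (χ ∘ₗ TensorProduct.map LinearMap.id (TensorProduct.map B B))
              LinearMap.id ∘ₗ rbShuffle k C C C C ∘ₗ comul3 k ∘ₗ B) ∘ₗ
            ψ.symm.toLinearMap := by
        rw [show TensorProduct.map (ψ.toLinearMap ∘ₗ B ∘ₗ ψ.symm.toLinearMap)
            (ψ.toLinearMap ∘ₗ B ∘ₗ ψ.symm.toLinearMap) =
            TensorProduct.map ψ.toLinearMap ψ.toLinearMap ∘ₗ TensorProduct.map B B ∘ₗ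
              TensorProduct.map ψ.symm.toLinearMap ψ.symm.toLinearMap by
          rw [← TensorProduct.map_comp, ← TensorProduct.map_comp]]
        simp only [LinearMap.comp_assoc]
        rw [← hcomIL, ← LinearMap.comp_assoc ψ.symm.toLinearMap (Coalgebra.comul)
          (TensorProduct.map B B), hBrbL]
        simp only [LinearMap.comp_assoc]
      have hR : TensorProduct.map (χ ∘ₗ TensorProduct.map LinearMap.id
            (TensorProduct.map (ψ.toLinearMap ∘ₗ B ∘ₗ ψ.symm.toLinearMap)
              (ψ.toLinearMap ∘ₗ B ∘ₗ ψ.symm.toLinearMap))) LinearMap.id ∘ₗ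
          rbShuffle k C C C C ∘ₗ comul3 k ∘ₗ (ψ.toLinearMap ∘ₗ B ∘ₗ ψ.symm.toLinearMap) =
          TensorProduct.map ψ.toLinearMap ψ.toLinearMap ∘ₗ
            (TensorProduct.map (χ ∘ₗ TensorProduct.map LinearMap.id (TensorProduct.map B B))
              LinearMap.id ∘ₗ rbShuffle k C C C C ∘ₗ comul3 k ∘ₗ B) ∘ₗ
            ψ.symm.toLinearMap := by
        -- first: comul3 ∘ ψ = M3 ∘ comul3
        rw [show comul3 k ∘ₗ (ψ.toLinearMap ∘ₗ B ∘ₗ ψ.symm.toLinearMap) =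
            (comul3 k ∘ₗ ψ.toLinearMap) ∘ₗ B ∘ₗ ψ.symm.toLinearMap by
          simp only [LinearMap.comp_assoc], hcom3L]
        simp only [LinearMap.comp_assoc]
        rw [← LinearMap.comp_assoc _ _ (rbShuffle k C C C C), hnat]
        simp only [LinearMap.comp_assoc]
        rw [← LinearMap.comp_assoc _ _ (TensorProduct.map (χ ∘ₗ TensorProduct.map LinearMap.id
            (TensorProduct.map (ψ.toLinearMap ∘ₗ B ∘ₗ ψ.symm.toLinearMap)
              (ψ.toLinearMap ∘ₗ B ∘ₗ ψ.symm.toLinearMap))) LinearMap.id)]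
        rw [← TensorProduct.map_comp, LinearMap.id_comp]
        -- now simplify the first component
        rw [show (χ ∘ₗ TensorProduct.map LinearMap.id
              (TensorProduct.map (ψ.toLinearMap ∘ₗ B ∘ₗ ψ.symm.toLinearMap)
                (ψ.toLinearMap ∘ₗ B ∘ₗ ψ.symm.toLinearMap))) ∘ₗ
            TensorProduct.map ψ.toLinearMap (TensorProduct.map ψ.toLinearMap ψ.toLinearMap) =
            ψ.toLinearMap ∘ₗ (χ ∘ₗ TensorProduct.map LinearMap.id (TensorProduct.map B B)) by
          rw [LinearMap.comp_assoc, ← TensorProduct.map_comp, LinearMap.id_comp,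
            ← TensorProduct.map_comp, eB, TensorProduct.map_comp,
            show TensorProduct.map ψ.toLinearMap (TensorProduct.map ψ.toLinearMap ψ.toLinearMap ∘ₗ
                TensorProduct.map B B) =
              TensorProduct.map ψ.toLinearMap (TensorProduct.map ψ.toLinearMap ψ.toLinearMap) ∘ₗ
                TensorProduct.map LinearMap.id (TensorProduct.map B B) by
              conv_rhs => rw [← TensorProduct.map_comp]
              rw [LinearMap.comp_id],
            ← LinearMap.comp_assoc, hchiL, LinearMap.comp_assoc]]
        rw [show TensorProduct.map
            (ψ.toLinearMap ∘ₗ (χ ∘ₗ TensorProduct.map LinearMap.id (TensorProduct.map B B)))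
            ψ.toLinearMap =
            TensorProduct.map ψ.toLinearMap ψ.toLinearMap ∘ₗ
              TensorProduct.map (χ ∘ₗ TensorProduct.map LinearMap.id (TensorProduct.map B B))
                LinearMap.id by
          rw [← TensorProduct.map_comp, LinearMap.comp_id]]
        simp only [LinearMap.comp_assoc]
      rw [hL, hR]
    simpa using LinearMap.congr_fun key a
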